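/- arXiv:2302.05790 — 2 statements merged into one kernel-verified Lean document; each statement's English description precedes it below -/
import Mathlib

section
/- For each n, let (Y_{n,i}, X_{n,i}), i = 1, …, n, be i.i.d. pairs in ℝ × ℝ^p with ε_{n,i} = Y_{n,i} − G(X_{n,i}) satisfying E(ε_{n,i} | X_{n,i}) = 0 and E(ε_{n,i}² | X_{n,i}) = σ², where G is continuously differentiable with gradient G′ satisfying |G′(x)|₂ ≤ C_G on the (compact) support of X_{n,1}. Let G̃′_n be a sequence of (random) estimators of G′ such that, for some sequence r_n → 0, (1/n) Σ_{i=1}^n |G̃′_n(X_{n,i}) − G′(X_{n,i})|₂ = O_P(r_n) and (1/n) Σ_{i=1}^n |G̃′_n(X_{n,i}) − G′(X_{n,i})|₂² = O_P(r_n²). Define Σ_G = E[G′(X_{n,1}) G′(X_{n,1})ᵀ] and Σ̃_G = (1/n) Σ_{i=1}^n G̃′_n(X_{n,i}) G̃′_n(X_{n,i})ᵀ. Then ‖Σ̃_G − Σ_G‖ = O_P(r_n + n^{-1/2}). -/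
open MeasureTheory ProbabilityTheory Matrix Filter

/-- Spectral norm (largest singular value) of a real matrix. -/
noncomputable def specNorm {m n : Type*} [Fintype m] [Fintype n] [DecidableEq n]
    (A : Matrix m n ℝ) : ℝ :=
  ‖LinearMap.toContinuousLinearMap (Matrix.toEuclideanLin A)‖

/-- Euclidean norm of a vector. -/
noncomputable def vnorm {ι : Type*} [Fintype ι] (v : ι → ℝ) : ℝ :=
  Real.sqrt (∑ i, (v i) ^ 2)

/-- Entrywise expectation of a random matrix. -/
noncomputable def matExp {Ω : Type*} [MeasurableSpace Ω] (μ : MeasureTheory.Measure Ω)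
    {m n : Type*} (f : Ω → Matrix m n ℝ) : Matrix m n ℝ :=
  Matrix.of fun i j => ∫ ω, f ω i j ∂μ

/-- `Z n = O_P(a n)`: stochastic boundedness at the rate `a n`. -/
def IsBigOP {Ω : ℕ → Type*} [∀ n, MeasurableSpace (Ω n)] (μ : ∀ n, MeasureTheory.Measure (Ω n))
    (Z : ∀ n, Ω n → ℝ) (a : ℕ → ℝ) : Prop :=
  ∀ δ : ℝ, 0 < δ → ∃ M : ℝ, ∃ N : ℕ, ∀ n ≥ N, μ n {ω | M * a n < |Z n ω|} ≤ ENNReal.ofReal δ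


section AuxLemmas

variable {Ω : ℕ → Type*} [∀ n, MeasurableSpace (Ω n)] {μ : ∀ n, MeasureTheory.Measure (Ω n)}

lemma vnorm_nonneg' {ι : Type*} [Fintype ι] (v : ι → ℝ) : 0 ≤ vnorm v :=
  Real.sqrt_nonneg _

lemma abs_le_vnorm {ι : Type*} [Fintype ι] (v : ι → ℝ) (j : ι) : |v j| ≤ vnorm v := by
  rw [← Real.sqrt_sq_eq_abs]
  exact Real.sqrt_le_sqrt (Finset.single_le_sum (f := fun i => (v i) ^ 2)
    (fun i _ => sq_nonneg _) (Finset.mem_univ j))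

lemma isBigOP_of_abs_le {Z W : ∀ n, Ω n → ℝ} {a : ℕ → ℝ}
    (hW : IsBigOP μ W a) (h : ∀ n, ∀ᵐ ω ∂μ n, |Z n ω| ≤ |W n ω|) : IsBigOP μ Z a := by
  intro δ hδ
  obtain ⟨M, N, hMN⟩ := hW δ hδ
  refine ⟨M, N, fun n hn => ?_⟩
  refine le_trans (measure_mono_ae ?_) (hMN n hn)
  filter_upwards [h n] with ω hω hmem
  exact lt_of_lt_of_le hmem hω

lemma isBigOP_add {Z W : ∀ n, Ω n → ℝ} {a : ℕ → ℝ} (ha : ∀ n, 0 ≤ a n)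
    (hZ : IsBigOP μ Z a) (hW : IsBigOP μ W a) :
    IsBigOP μ (fun n ω => Z n ω + W n ω) a := by
  intro δ hδ
  obtain ⟨M1, N1, h1⟩ := hZ (δ / 2) (by linarith)
  obtain ⟨M2, N2, h2⟩ := hW (δ / 2) (by linarith)
  refine ⟨|M1| + |M2|, max N1 N2, fun n hn => ?_⟩
  have hsub : {ω | (|M1| + |M2|) * a n < |Z n ω + W n ω|} ⊆
      {ω | M1 * a n < |Z n ω|} ∪ {ω | M2 * a n < |W n ω|} := by
    intro ω hω
    by_contra hc
    simp only [Set.mem_union, Set.mem_setOf_eq, not_or, not_lt] at hc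
    have h1' : |Z n ω| ≤ |M1| * a n := hc.1.trans (mul_le_mul_of_nonneg_right (le_abs_self _) (ha n))
    have h2' : |W n ω| ≤ |M2| * a n := hc.2.trans (mul_le_mul_of_nonneg_right (le_abs_self _) (ha n))
    have := (abs_add_le (Z n ω) (W n ω)).trans (add_le_add h1' h2')
    simp only [Set.mem_setOf_eq] at hω
    nlinarith
  calc μ n {ω | (|M1| + |M2|) * a n < |Z n ω + W n ω|}
      ≤ μ n ({ω | M1 * a n < |Z n ω|} ∪ {ω | M2 * a n < |W n ω|}) := measure_mono hsub
    _ ≤ μ n {ω | M1 * a n < |Z n ω|} + μ n {ω | M2 * a n < |W n ω|} := measure_union_le _ _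
    _ ≤ ENNReal.ofReal (δ / 2) + ENNReal.ofReal (δ / 2) :=
        add_le_add (h1 n (le_trans (le_max_left _ _) hn)) (h2 n (le_trans (le_max_right _ _) hn))
    _ = ENNReal.ofReal δ := by
        rw [← ENNReal.ofReal_add (by linarith) (by linarith)]; norm_num

lemma isBigOP_const_mul {Z : ∀ n, Ω n → ℝ} {a : ℕ → ℝ} (c : ℝ) (ha : ∀ n, 0 ≤ a n)
    (hZ : IsBigOP μ Z a) : IsBigOP μ (fun n ω => c * Z n ω) a := by
  intro δ hδ
  obtain ⟨M, N, hMN⟩ := hZ δ hδ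
  refine ⟨|c| * |M|, N, fun n hn => ?_⟩
  refine le_trans (measure_mono ?_) (hMN n hn)
  intro ω hω
  simp only [Set.mem_setOf_eq] at hω ⊢
  by_contra hc
  push_neg at hc
  have : |c * Z n ω| ≤ |c| * (|M| * a n) := by
    rw [abs_mul]
    exact mul_le_mul_of_nonneg_left
      (hc.trans (mul_le_mul_of_nonneg_right (le_abs_self _) (ha n))) (abs_nonneg _)
  rw [← mul_assoc] at this
  exact absurd hω (not_lt.2 this)

lemma isBigOP_mono_rate {Z : ∀ n, Ω n → ℝ} {a b : ℕ → ℝ}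
    (hab : ∀ᶠ n in atTop, 0 ≤ a n ∧ a n ≤ b n) (hZ : IsBigOP μ Z a) : IsBigOP μ Z b := by
  intro δ hδ
  obtain ⟨M, N, hMN⟩ := hZ δ hδ
  obtain ⟨N', hN'⟩ := eventually_atTop.1 hab
  refine ⟨|M|, max N N', fun n hn => ?_⟩
  refine le_trans (measure_mono ?_) (hMN n (le_trans (le_max_left _ _) hn))
  intro ω hω
  simp only [Set.mem_setOf_eq] at hω ⊢
  obtain ⟨h0, hle⟩ := hN' n (le_trans (le_max_right _ _) hn)
  calc M * a n ≤ |M| * a n := mul_le_mul_of_nonneg_right (le_abs_self _) h0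
    _ ≤ |M| * b n := mul_le_mul_of_nonneg_left hle (abs_nonneg _)
    _ < |Z n ω| := hω

lemma isBigOP_zero {a : ℕ → ℝ} (ha : ∀ n, 0 ≤ a n) :
    IsBigOP μ (fun _ _ => (0 : ℝ)) a := by
  intro δ hδ
  refine ⟨1, 0, fun n _ => ?_⟩
  have : {ω : Ω n | 1 * a n < |(0 : ℝ)|} = ∅ := by
    ext ω; simp only [Set.mem_setOf_eq, abs_zero, Set.mem_empty_iff_false, iff_false, not_lt]
    linarith [ha n]
  rw [this]
  simp

lemma isBigOP_finset_sum {ι : Type*} (s : Finset ι) {Z : ι → ∀ n, Ω n → ℝ} {a : ℕ → ℝ}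
    (ha : ∀ n, 0 ≤ a n) (h : ∀ i ∈ s, IsBigOP μ (Z i) a) :
    IsBigOP μ (fun n ω => ∑ i ∈ s, Z i n ω) a := by
  classical
  induction s using Finset.induction_on with
  | empty => simpa using isBigOP_zero ha
  | @insert k s' hk ih =>
    simp only [Finset.sum_insert hk]
    exact isBigOP_add ha (h k (Finset.mem_insert_self _ _))
      (ih fun i hi => h i (Finset.mem_insert_of_mem hi))

end AuxLemmas

section SpecAux

lemma euclid_norm_le_sum_abs {ι : Type*} [Fintype ι] (y : EuclideanSpace ℝ ι) :
    ‖y‖ ≤ ∑ i, |y i| := by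
  rw [EuclideanSpace.norm_eq]
  have h1 : ∑ i, ‖y i‖ ^ 2 ≤ (∑ i, |y i|) ^ 2 := by
    simpa [Real.norm_eq_abs, sq_abs] using
      Finset.sum_sq_le_sq_sum_of_nonneg (s := Finset.univ) (f := fun i => |y i|)
      (fun i _ => abs_nonneg _)
  calc Real.sqrt (∑ i, ‖y i‖ ^ 2) ≤ Real.sqrt ((∑ i, |y i|) ^ 2) := Real.sqrt_le_sqrt h1
    _ = ∑ i, |y i| := Real.sqrt_sq (Finset.sum_nonneg fun i _ => abs_nonneg _)

lemma abs_coord_le_norm {ι : Type*} [Fintype ι] (y : EuclideanSpace ℝ ι) (i : ι) :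
    |y i| ≤ ‖y‖ := by
  rw [EuclideanSpace.norm_eq, ← Real.sqrt_sq_eq_abs]
  exact Real.sqrt_le_sqrt (by
    simpa [Real.norm_eq_abs, sq_abs] using
      Finset.single_le_sum (f := fun k => ‖y k‖ ^ 2) (fun k _ => sq_nonneg _) (Finset.mem_univ i))

lemma specNorm_le_sum_abs {m n : Type*} [Fintype m] [Fintype n] [DecidableEq n]
    (A : Matrix m n ℝ) : specNorm A ≤ ∑ i, ∑ j, |A i j| := by
  refine ContinuousLinearMap.opNorm_le_bound _
    (Finset.sum_nonneg fun i _ => Finset.sum_nonneg fun j _ => abs_nonneg _) fun x => ?_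
  have happ : ∀ i, (LinearMap.toContinuousLinearMap (Matrix.toEuclideanLin A) x) i
      = ∑ j, A i j * x j := by
    intro i
    simp [Matrix.toEuclideanLin_apply, Matrix.mulVec, dotProduct]
  calc ‖LinearMap.toContinuousLinearMap (Matrix.toEuclideanLin A) x‖
      ≤ ∑ i, |(LinearMap.toContinuousLinearMap (Matrix.toEuclideanLin A) x) i| :=
        euclid_norm_le_sum_abs _
    _ ≤ ∑ i, (∑ j, |A i j|) * ‖x‖ := by
        refine Finset.sum_le_sum fun i _ => ?_
        rw [happ i, Finset.sum_mul]
        refine (Finset.abs_sum_le_sum_abs _ _).trans (Finset.sum_le_sum fun j _ => ?_)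
        rw [abs_mul]
        exact mul_le_mul_of_nonneg_left (abs_coord_le_norm x j) (abs_nonneg _)
    _ = (∑ i, ∑ j, |A i j|) * ‖x‖ := by rw [Finset.sum_mul]

end SpecAux

lemma sample_mean_bigOP
    {Ω : ℕ → Type*} [∀ n, MeasurableSpace (Ω n)] {μ : ∀ n, MeasureTheory.Measure (Ω n)}
    [∀ n, IsProbabilityMeasure (μ n)]
    (W : ∀ n, Fin n → Ω n → ℝ) (m B : ℝ)
    (hmeas : ∀ n i, Measurable (W n i))
    (hbdd : ∀ n i, ∀ᵐ ω ∂μ n, |W n i ω| ≤ B)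
    (hmean : ∀ n (i : Fin n), ∫ ω, W n i ω ∂μ n = m)
    (hindep : ∀ n, Set.Pairwise ↑(Finset.univ : Finset (Fin n))
      fun i j => IndepFun (W n i) (W n j) (μ n)) :
    IsBigOP μ (fun n ω => (n : ℝ)⁻¹ * ∑ i, W n i ω - m) (fun n => (Real.sqrt n)⁻¹) := by
  intro δ hδ
  refine ⟨Real.sqrt (B ^ 2 / δ) + 1, 1, fun n hn => ?_⟩
  set M : ℝ := Real.sqrt (B ^ 2 / δ) + 1 with hM
  have hM1 : 1 ≤ M := le_add_of_nonneg_left (Real.sqrt_nonneg _)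
  have hM0 : 0 < M := lt_of_lt_of_le one_pos hM1
  have hMsq : B ^ 2 / δ ≤ M ^ 2 := by
    have h1 : Real.sqrt (B ^ 2 / δ) ^ 2 = B ^ 2 / δ :=
      Real.sq_sqrt (div_nonneg (sq_nonneg _) hδ.le)
    nlinarith [Real.sqrt_nonneg (B ^ 2 / δ)]
  have hn0 : (0 : ℝ) < (n : ℝ) := by exact_mod_cast hn
  have hsq : (0 : ℝ) < Real.sqrt n := Real.sqrt_pos.2 hn0
  have hW2 : ∀ i : Fin n, MemLp (W n i) 2 (μ n) := fun i =>
    MemLp.of_bound (hmeas n i).aestronglyMeasurable B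
      (by filter_upwards [hbdd n i] with ω h; simpa [Real.norm_eq_abs] using h)
  set S : Ω n → ℝ := fun ω => (n : ℝ)⁻¹ * ∑ i, W n i ω with hSdef
  have hSsum : S = (n : ℝ)⁻¹ • (∑ i, W n i) := by
    ext ω; simp [hSdef, Finset.sum_apply]
  have hS2 : MemLp S 2 (μ n) := by
    rw [hSsum]
    exact (memLp_finset_sum' _ fun i _ => hW2 i).const_smul _
  have hSmean : ∫ ω, S ω ∂μ n = m := by
    rw [hSdef]
    simp only
    rw [integral_const_mul, integral_finset_sum _ fun i _ => (hW2 i).integrable one_le_two]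
    simp only [hmean n]
    rw [Finset.sum_const, Finset.card_univ, Fintype.card_fin, nsmul_eq_mul]
    field_simp
  have hvarW : ∀ i : Fin n, variance (W n i) (μ n) ≤ B ^ 2 := by
    intro i
    refine (variance_le_expectation_sq (hW2 i).aestronglyMeasurable).trans ?_
    have : ∫ ω, (W n i ω) ^ 2 ∂μ n ≤ ∫ _ω, B ^ 2 ∂μ n := by
      refine integral_mono_ae (hW2 i).integrable_sq (integrable_const _) ?_
      filter_upwards [hbdd n i] with ω h
      calc (W n i ω) ^ 2 = |W n i ω| ^ 2 := (sq_abs _).symm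
        _ ≤ B ^ 2 := by nlinarith [abs_nonneg (W n i ω)]
    simpa using this
  have hvarS : variance S (μ n) ≤ B ^ 2 / n := by
    rw [hSsum, variance_smul' ((n : ℝ)⁻¹),
      IndepFun.variance_sum (fun i _ => hW2 i) (hindep n)]
    calc (n : ℝ)⁻¹ ^ 2 * ∑ i : Fin n, variance (W n i) (μ n)
        ≤ (n : ℝ)⁻¹ ^ 2 * ((n : ℝ) * B ^ 2) := by
          refine mul_le_mul_of_nonneg_left ?_ (sq_nonneg _)
          calc ∑ i : Fin n, variance (W n i) (μ n) ≤ ∑ _i : Fin n, B ^ 2 :=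
                Finset.sum_le_sum fun i _ => hvarW i
            _ = (n : ℝ) * B ^ 2 := by
                rw [Finset.sum_const, Finset.card_univ, Fintype.card_fin, nsmul_eq_mul]
      _ = B ^ 2 / n := by field_simp
  set c : ℝ := M * (Real.sqrt n)⁻¹ with hc
  have hcpos : 0 < c := mul_pos hM0 (inv_pos.2 hsq)
  have hcheb := meas_ge_le_variance_div_sq (μ := μ n) hS2 hcpos
  rw [hSmean] at hcheb
  have hsub : {ω | M * (Real.sqrt n)⁻¹ < |(n : ℝ)⁻¹ * ∑ i, W n i ω - m|} ⊆
      {ω | c ≤ |S ω - m|} := by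
    intro ω hω
    simp only [Set.mem_setOf_eq] at hω ⊢
    exact le_of_lt hω
  refine le_trans (le_trans (measure_mono hsub) hcheb) (ENNReal.ofReal_le_ofReal ?_)
  have hc2 : c ^ 2 = M ^ 2 / n := by
    rw [hc, mul_pow, inv_pow, Real.sq_sqrt hn0.le, div_eq_mul_inv]
  rw [hc2, div_le_iff₀ (by positivity)]
  have hB2 : B ^ 2 ≤ δ * M ^ 2 := by
    have h := (div_le_iff₀ hδ).1 hMsq
    nlinarith
  calc variance S (μ n) ≤ B ^ 2 / n := hvarS
    _ ≤ δ * M ^ 2 / n := by gcongr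
    _ = δ * (M ^ 2 / n) := by ring


/-- **Theorem 1(ii) of the paper** (convergence of the outer-product-of-gradients
estimator): if the estimated gradients are accurate at the rate `r n` in averaged first
and second moments, and the true gradient is bounded, then
`‖Σ̃_G − Σ_G‖ = O_P(r n + n^{-1/2})`. -/
theorem opg_matrix_rate
    {Ω : ℕ → Type*} [∀ n, MeasurableSpace (Ω n)]
    (μ : ∀ n, MeasureTheory.Measure (Ω n)) [∀ n, IsProbabilityMeasure (μ n)]
    (p : ℕ)
    (X : ∀ n, Fin n → Ω n → (Fin p → ℝ)) (Y : ∀ n, Fin n → Ω n → ℝ)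
    (hX : ∀ n i, Measurable (X n i)) (hY : ∀ n i, Measurable (Y n i))
    (hindep : ∀ n, iIndepFun (fun i ω => (Y n i ω, X n i ω)) (μ n))
    (hident : ∀ n i j,
      IdentDistrib (fun ω => (Y n i ω, X n i ω)) (fun ω => (Y n j ω, X n j ω)) (μ n) (μ n))
    -- the regression function, its gradient, and the conditional error moments
    (G : (Fin p → ℝ) → ℝ) (G' : (Fin p → ℝ) → (Fin p → ℝ))
    (hGsmooth : ContDiff ℝ 1 G)
    (hG' : ∀ x j, G' x j = fderiv ℝ G x (Pi.single j 1))
    (σ2 : ℝ)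
    (hmean : ∀ n i,
      (μ n)[fun ω => Y n i ω - G (X n i ω) | MeasurableSpace.comap (X n i) inferInstance]
        =ᵐ[μ n] fun _ => 0)
    (hvar : ∀ n i,
      (μ n)[fun ω => (Y n i ω - G (X n i ω)) ^ 2 | MeasurableSpace.comap (X n i) inferInstance]
        =ᵐ[μ n] fun _ => σ2)
    -- the true gradient is bounded on the support of the covariates
    (CG : ℝ)
    (hCG : ∀ n i, ∀ᵐ ω ∂μ n, vnorm (G' (X n i ω)) ≤ CG)
    -- the gradient estimators and their accuracy
    (tG : ∀ n, Ω n → (Fin p → ℝ) → (Fin p → ℝ))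
    (r : ℕ → ℝ) (hrpos : ∀ n, 0 ≤ r n) (hr : Tendsto r atTop (nhds 0))
    (hOP1 : IsBigOP μ (fun n ω =>
      (n : ℝ)⁻¹ * ∑ i, vnorm (fun j => tG n ω (X n i ω) j - G' (X n i ω) j)) r)
    (hOP2 : IsBigOP μ (fun n ω =>
      (n : ℝ)⁻¹ * ∑ i, (vnorm (fun j => tG n ω (X n i ω) j - G' (X n i ω) j)) ^ 2)
      (fun n => (r n) ^ 2))
    -- the population and empirical outer-product-of-gradients matrices
    (SigG : Matrix (Fin p) (Fin p) ℝ)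
    (hSigG : ∀ n (i : Fin n),
      matExp (μ n) (fun ω => Matrix.vecMulVec (G' (X n i ω)) (G' (X n i ω))) = SigG) :
    IsBigOP μ (fun n ω => specNorm
        ((n : ℝ)⁻¹ • ∑ i, Matrix.vecMulVec (tG n ω (X n i ω)) (tG n ω (X n i ω)) - SigG))
      (fun n => r n + (Real.sqrt n)⁻¹) := by
  classical
  -- notation
  set a : ℕ → ℝ := fun n => r n + (Real.sqrt n)⁻¹ with ha_def
  have ha : ∀ n, 0 ≤ a n := fun n => add_nonneg (hrpos n) (inv_nonneg.2 (Real.sqrt_nonneg _))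
  -- the gradient coordinates are continuous
  have hG'c : ∀ j : Fin p, Continuous fun x => G' x j := by
    intro j
    have : (fun x => G' x j) = fun x => fderiv ℝ G x (Pi.single j 1) :=
      funext fun x => hG' x j
    rw [this]
    exact (hGsmooth.continuous_fderiv one_ne_zero).clm_apply continuous_const
  -- CG is nonnegative
  have hCG0 : 0 ≤ CG := by
    have hne : (MeasureTheory.ae (μ 1)).NeBot :=
      MeasureTheory.ae_neBot.2 (IsProbabilityMeasure.ne_zero (μ 1))
    obtain ⟨ω, hω⟩ := (hCG 1 0).exists
    exact le_trans (vnorm_nonneg' _) hω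
  -- the entrywise empirical means of the true gradient outer products
  have hCjk : ∀ j k : Fin p, IsBigOP μ
      (fun n ω => (n : ℝ)⁻¹ * ∑ i, G' (X n i ω) j * G' (X n i ω) k - SigG j k)
      (fun n => (Real.sqrt n)⁻¹) := by
    intro j k
    have hgmeas : Measurable fun yx : ℝ × (Fin p → ℝ) => G' yx.2 j * G' yx.2 k :=
      (((hG'c j).measurable.comp measurable_snd).mul
        ((hG'c k).measurable.comp measurable_snd))
    refine sample_mean_bigOP
      (fun n i ω => G' (X n i ω) j * G' (X n i ω) k) (SigG j k) (CG ^ 2)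
      (fun n i => (((hG'c j).measurable.comp (hX n i)).mul
        ((hG'c k).measurable.comp (hX n i)))) ?_ ?_ ?_
    · intro n i
      filter_upwards [hCG n i] with ω h
      calc |G' (X n i ω) j * G' (X n i ω) k| = |G' (X n i ω) j| * |G' (X n i ω) k| := abs_mul _ _
        _ ≤ vnorm (G' (X n i ω)) * vnorm (G' (X n i ω)) :=
            mul_le_mul (abs_le_vnorm _ _) (abs_le_vnorm _ _) (abs_nonneg _) (vnorm_nonneg' _)
        _ ≤ CG * CG := mul_le_mul h h (vnorm_nonneg' _) hCG0
        _ = CG ^ 2 := (sq CG).symm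
    · intro n i
      have h := hSigG n i
      have h2 : matExp (μ n) (fun ω => Matrix.vecMulVec (G' (X n i ω)) (G' (X n i ω))) j k
          = SigG j k := by rw [h]
      simpa [matExp, Matrix.vecMulVec_apply] using h2
    · intro n
      intro i _ k' _ hik
      have hI := (hindep n).comp
        (fun _ => fun yx : ℝ × (Fin p → ℝ) => G' yx.2 j * G' yx.2 k) (fun _ => hgmeas)
      exact hI.indepFun hik
  -- assembling the rate for each piece
  have hev1 : ∀ᶠ n in atTop, 0 ≤ (r n) ^ 2 ∧ (r n) ^ 2 ≤ a n := by
    have h1 : ∀ᶠ n in atTop, r n < 1 := hr.eventually_lt_const one_pos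
    filter_upwards [h1] with n hn1
    refine ⟨sq_nonneg _, ?_⟩
    have : (r n) ^ 2 ≤ r n := by nlinarith [hrpos n]
    exact this.trans (le_add_of_nonneg_right (inv_nonneg.2 (Real.sqrt_nonneg _)))
  have hev2 : ∀ᶠ (n : ℕ) in atTop, 0 ≤ r n ∧ r n ≤ a n :=
    Filter.Eventually.of_forall fun n =>
      ⟨hrpos n, le_add_of_nonneg_right (inv_nonneg.2 (Real.sqrt_nonneg _))⟩
  have hev3 : ∀ᶠ (n : ℕ) in atTop, 0 ≤ (Real.sqrt n)⁻¹ ∧ (Real.sqrt n)⁻¹ ≤ a n :=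
    Filter.Eventually.of_forall fun n =>
      ⟨inv_nonneg.2 (Real.sqrt_nonneg _), le_add_of_nonneg_left (hrpos n)⟩
  have hS2a : IsBigOP μ (fun n ω =>
      (n : ℝ)⁻¹ * ∑ i, (vnorm (fun j => tG n ω (X n i ω) j - G' (X n i ω) j)) ^ 2) a :=
    isBigOP_mono_rate hev1 hOP2
  have hS1a : IsBigOP μ (fun n ω =>
      (n : ℝ)⁻¹ * ∑ i, vnorm (fun j => tG n ω (X n i ω) j - G' (X n i ω) j)) a :=
    isBigOP_mono_rate hev2 hOP1
  have hCa : ∀ q : Fin p × Fin p, IsBigOP μ (fun n ω =>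
      |(n : ℝ)⁻¹ * ∑ i, G' (X n i ω) q.1 * G' (X n i ω) q.2 - SigG q.1 q.2|) a := by
    intro q
    refine isBigOP_of_abs_le (isBigOP_mono_rate hev3 (hCjk q.1 q.2)) fun n => ?_
    filter_upwards with ω
    rw [abs_abs]
  -- the dominating process
  set U : ∀ n, Ω n → ℝ := fun n ω =>
    (p : ℝ) ^ 2 * ((n : ℝ)⁻¹ * ∑ i, (vnorm (fun j => tG n ω (X n i ω) j - G' (X n i ω) j)) ^ 2) +
    (2 * CG * (p : ℝ) ^ 2) *
      ((n : ℝ)⁻¹ * ∑ i, vnorm (fun j => tG n ω (X n i ω) j - G' (X n i ω) j)) +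
    ∑ q : Fin p × Fin p,
      |(n : ℝ)⁻¹ * ∑ i, G' (X n i ω) q.1 * G' (X n i ω) q.2 - SigG q.1 q.2| with hU_def
  have hU : IsBigOP μ U a := by
    refine isBigOP_add ha (isBigOP_add ha ?_ ?_) ?_
    · exact isBigOP_const_mul _ ha hS2a
    · exact isBigOP_const_mul _ ha hS1a
    · exact isBigOP_finset_sum Finset.univ ha fun q _ => hCa q
  -- domination
  refine isBigOP_of_abs_le hU fun n => ?_
  filter_upwards [MeasureTheory.ae_all_iff.2 (hCG n)] with ω hω
  set d : Fin n → Fin p → ℝ := fun i j => tG n ω (X n i ω) j - G' (X n i ω) j with hd_def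
  set v : Fin n → Fin p → ℝ := fun i => G' (X n i ω) with hv_def
  set T : Matrix (Fin p) (Fin p) ℝ :=
    (n : ℝ)⁻¹ • ∑ i, Matrix.vecMulVec (tG n ω (X n i ω)) (tG n ω (X n i ω)) - SigG with hT_def
  set S1 : ℝ := (n : ℝ)⁻¹ * ∑ i, vnorm (d i) with hS1_def
  set S2 : ℝ := (n : ℝ)⁻¹ * ∑ i, (vnorm (d i)) ^ 2 with hS2_def
  have hn0 : (0 : ℝ) ≤ (n : ℝ)⁻¹ := inv_nonneg.2 (Nat.cast_nonneg _)
  have hS1nn : 0 ≤ S1 :=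
    mul_nonneg hn0 (Finset.sum_nonneg fun i _ => vnorm_nonneg' _)
  have hS2nn : 0 ≤ S2 :=
    mul_nonneg hn0 (Finset.sum_nonneg fun i _ => sq_nonneg _)
  have hTjk : ∀ j k : Fin p, |T j k| ≤ S2 + 2 * CG * S1 +
      |(n : ℝ)⁻¹ * ∑ i, v i j * v i k - SigG j k| := by
    intro j k
    have hsplit : T j k = (n : ℝ)⁻¹ * ∑ i, (d i j * d i k + d i j * v i k + v i j * d i k) +
        ((n : ℝ)⁻¹ * ∑ i, v i j * v i k - SigG j k) := by
      have hentry : T j k = (n : ℝ)⁻¹ * ∑ i,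
          (tG n ω (X n i ω) j * tG n ω (X n i ω) k) - SigG j k := by
        simp [hT_def, Matrix.sub_apply, Matrix.smul_apply, Matrix.sum_apply,
          Matrix.vecMulVec_apply, smul_eq_mul]
      rw [hentry]
      have hper : ∀ i : Fin n, tG n ω (X n i ω) j * tG n ω (X n i ω) k =
          (d i j * d i k + d i j * v i k + v i j * d i k) + v i j * v i k := by
        intro i
        simp only [hd_def, hv_def]
        ring
      rw [Finset.sum_congr rfl fun i _ => hper i, Finset.sum_add_distrib]
      ring
    have hper2 : ∀ i : Fin n, |d i j * d i k + d i j * v i k + v i j * d i k| ≤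
        (vnorm (d i)) ^ 2 + 2 * CG * vnorm (d i) := by
      intro i
      have h1 := abs_le_vnorm (d i) j
      have h2 := abs_le_vnorm (d i) k
      have h3 : |v i j| ≤ CG := (abs_le_vnorm (v i) j).trans (hω i)
      have h4 : |v i k| ≤ CG := (abs_le_vnorm (v i) k).trans (hω i)
      calc |d i j * d i k + d i j * v i k + v i j * d i k|
          ≤ |d i j * d i k| + |d i j * v i k| + |v i j * d i k| :=
            (abs_add_le _ _).trans (add_le_add_left (abs_add_le _ _) _)
        _ = |d i j| * |d i k| + |d i j| * |v i k| + |v i j| * |d i k| := by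
            rw [abs_mul, abs_mul, abs_mul]
        _ ≤ vnorm (d i) * vnorm (d i) + vnorm (d i) * CG + CG * vnorm (d i) := by
            refine add_le_add (add_le_add ?_ ?_) ?_
            · exact mul_le_mul h1 h2 (abs_nonneg _) (vnorm_nonneg' _)
            · exact mul_le_mul h1 h4 (abs_nonneg _) (vnorm_nonneg' _)
            · exact mul_le_mul h3 h2 (abs_nonneg _) hCG0
        _ = (vnorm (d i)) ^ 2 + 2 * CG * vnorm (d i) := by ring
    have hfirst : |(n : ℝ)⁻¹ * ∑ i, (d i j * d i k + d i j * v i k + v i j * d i k)| ≤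
        S2 + 2 * CG * S1 := by
      rw [abs_mul, abs_of_nonneg hn0]
      calc (n : ℝ)⁻¹ * |∑ i, (d i j * d i k + d i j * v i k + v i j * d i k)|
          ≤ (n : ℝ)⁻¹ * ∑ i, ((vnorm (d i)) ^ 2 + 2 * CG * vnorm (d i)) := by
            refine mul_le_mul_of_nonneg_left ?_ hn0
            exact (Finset.abs_sum_le_sum_abs _ _).trans (Finset.sum_le_sum fun i _ => hper2 i)
        _ = S2 + 2 * CG * S1 := by
            rw [hS2_def, hS1_def, Finset.sum_add_distrib, ← Finset.mul_sum]
            ring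
    calc |T j k| ≤ |(n : ℝ)⁻¹ * ∑ i, (d i j * d i k + d i j * v i k + v i j * d i k)| +
          |(n : ℝ)⁻¹ * ∑ i, v i j * v i k - SigG j k| := by
          rw [hsplit]; exact abs_add_le _ _
      _ ≤ S2 + 2 * CG * S1 + |(n : ℝ)⁻¹ * ∑ i, v i j * v i k - SigG j k| :=
          add_le_add_left hfirst _
  have hZnn : 0 ≤ specNorm T := norm_nonneg _
  have hUnn : 0 ≤ U n ω := by
    refine add_nonneg (add_nonneg ?_ ?_) ?_
    · exact mul_nonneg (sq_nonneg _) hS2nn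
    · exact mul_nonneg (by positivity) hS1nn
    · exact Finset.sum_nonneg fun q _ => abs_nonneg _
  rw [abs_of_nonneg hZnn, abs_of_nonneg hUnn]
  calc specNorm T ≤ ∑ j : Fin p, ∑ k : Fin p, |T j k| := specNorm_le_sum_abs T
    _ ≤ ∑ j : Fin p, ∑ k : Fin p, (S2 + 2 * CG * S1 +
        |(n : ℝ)⁻¹ * ∑ i, v i j * v i k - SigG j k|) :=
        Finset.sum_le_sum fun j _ => Finset.sum_le_sum fun k _ => hTjk j k
    _ = U n ω := by
        rw [hU_def]
        simp only [Finset.sum_add_distrib, Finset.sum_const, Finset.card_univ,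
          Fintype.card_fin, nsmul_eq_mul]
        rw [Fintype.sum_prod_type]
        simp only [hv_def, hS1_def, hS2_def]
        push_cast
        ring
end

section
/- Let Σ_G be a p×p real symmetric positive semidefinite matrix of rank d whose d nonzero eigenvalues are positive and pairwise distinct, and let B be a p×d matrix whose columns are orthonormal eigenvectors of Σ_G corresponding to its d largest eigenvalues. Let Σ̃_n be a sequence of random p×p real symmetric matrices with ‖Σ̃_n − Σ_G‖ = O_P(r_n) for some sequence r_n → 0, and let B̃_n be a p×d matrix whose columns are orthonormal eigenvectors of Σ̃_n corresponding to its d largest eigenvalues. Then there exists a sequence of (random) d×d orthogonal matrices Q_n such that ‖B̃_n − B Q_n‖ = O_P(r_n). -/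
open MeasureTheory ProbabilityTheory Matrix Filter

/-- `B` is a `p × d` matrix whose columns form an orthonormal family of eigenvectors of
`A` with eigenvalues `lam`, corresponding to the `d` largest eigenvalues of `A`: any
eigenvector of `A` orthogonal to all columns of `B` has eigenvalue at most every
`lam j`. -/
def IsTopEigenbasis {p d : ℕ} (A : Matrix (Fin p) (Fin p) ℝ)
    (B : Matrix (Fin p) (Fin d) ℝ) (lam : Fin d → ℝ) : Prop :=
  Bᵀ * B = 1 ∧
  (∀ j, A.mulVec (fun i => B i j) = lam j • fun i => B i j) ∧
  (∀ (c : ℝ) (v : Fin p → ℝ), v ≠ 0 → A.mulVec v = c • v →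
    (∀ j, v ⬝ᵥ (fun i => B i j) = 0) → ∀ j, c ≤ lam j)

open scoped Matrix.Norms.L2Operator RealInnerProductSpace
open Module

set_option maxHeartbeats 2000000
namespace SDRAux

noncomputable def toE {n : ℕ} (v : Fin n → ℝ) : EuclideanSpace ℝ (Fin n) :=
  (WithLp.equiv 2 (Fin n → ℝ)).symm v

lemma specNorm_eq {m n : Type*} [Fintype m] [Fintype n] [DecidableEq n] (A : Matrix m n ℝ) :
    specNorm A = ‖A‖ := rfl

lemma toE_apply {n : ℕ} (v : Fin n → ℝ) (i : Fin n) : toE v i = v i := rfl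

lemma norm_toE {n : ℕ} (v : Fin n → ℝ) : ‖toE v‖ = Real.sqrt (∑ i, v i ^ 2) := by
  rw [EuclideanSpace.norm_eq]
  congr 1
  refine Finset.sum_congr rfl fun i _ => ?_
  rw [Real.norm_eq_abs, sq_abs]; rfl

lemma toEuclideanLin_toE {m n : ℕ} (A : Matrix (Fin m) (Fin n) ℝ) (v : Fin n → ℝ) :
    Matrix.toEuclideanLin A (toE v) = toE (A *ᵥ v) := rfl

lemma mulVec_norm_le {m n : ℕ} (A : Matrix (Fin m) (Fin n) ℝ) (v : Fin n → ℝ) :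
    ‖toE (A *ᵥ v)‖ ≤ ‖A‖ * ‖toE v‖ :=
  A.l2_opNorm_mulVec (toE v)

lemma norm_le_bound {m n : ℕ} (A : Matrix (Fin m) (Fin n) ℝ) (c : ℝ) (hc : 0 ≤ c)
    (h : ∀ v : Fin n → ℝ, ‖toE (A *ᵥ v)‖ ≤ c * ‖toE v‖) : ‖A‖ ≤ c := by
  rw [Matrix.l2_opNorm_def]
  refine ContinuousLinearMap.opNorm_le_bound _ hc fun x => ?_
  exact h (WithLp.equiv 2 (Fin n → ℝ) x)


lemma abs_le_norm {n : ℕ} (v : Fin n → ℝ) (i : Fin n) : |v i| ≤ ‖toE v‖ := by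
  rw [norm_toE, ← Real.sqrt_sq_eq_abs]
  exact Real.sqrt_le_sqrt (Finset.single_le_sum (fun j _ => sq_nonneg (v j)) (Finset.mem_univ i))

lemma norm_toE_le_sum {n : ℕ} (v : Fin n → ℝ) : ‖toE v‖ ≤ ∑ i, |v i| := by
  rw [norm_toE]
  have h1 : ∑ i, v i ^ 2 ≤ (∑ i, |v i|) ^ 2 := by
    calc ∑ i, v i ^ 2 = ∑ i, |v i| ^ 2 := by
          exact Finset.sum_congr rfl fun i _ => (sq_abs (v i)).symm
      _ ≤ (∑ i, |v i|) ^ 2 :=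
          Finset.sum_sq_le_sq_sum_of_nonneg (fun i _ => abs_nonneg (v i))
  calc Real.sqrt (∑ i, v i ^ 2) ≤ Real.sqrt ((∑ i, |v i|) ^ 2) := Real.sqrt_le_sqrt h1
    _ = ∑ i, |v i| := Real.sqrt_sq (Finset.sum_nonneg fun j _ => abs_nonneg _)

lemma inner_toE {n : ℕ} (v w : Fin n → ℝ) : ⟪toE v, toE w⟫ = v ⬝ᵥ w := by
  simp [toE, PiLp.inner_apply, dotProduct, mul_comm]

lemma dot_le {n : ℕ} (v w : Fin n → ℝ) : |v ⬝ᵥ w| ≤ ‖toE v‖ * ‖toE w‖ := by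
  rw [← inner_toE]; exact abs_real_inner_le_norm _ _


lemma norm_matrix_le_sum_abs {m n : ℕ} (A : Matrix (Fin m) (Fin n) ℝ) :
    ‖A‖ ≤ ∑ i, ∑ j, |A i j| := by
  refine norm_le_bound A _ (Finset.sum_nonneg fun i _ => Finset.sum_nonneg fun j _ => abs_nonneg _)
    fun v => ?_
  calc ‖toE (A *ᵥ v)‖ ≤ ∑ i, |(A *ᵥ v) i| := norm_toE_le_sum _
    _ ≤ ∑ i, ∑ j, |A i j| * ‖toE v‖ := by
        refine Finset.sum_le_sum fun i _ => ?_
        calc |(A *ᵥ v) i| = |∑ j, A i j * v j| := rfl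
          _ ≤ ∑ j, |A i j * v j| := Finset.abs_sum_le_sum_abs _ _
          _ ≤ ∑ j, |A i j| * ‖toE v‖ := by
              refine Finset.sum_le_sum fun j _ => ?_
              rw [abs_mul]
              exact mul_le_mul_of_nonneg_left (abs_le_norm v j) (abs_nonneg _)
    _ = (∑ i, ∑ j, |A i j|) * ‖toE v‖ := by rw [Finset.sum_mul]; simp [Finset.sum_mul]

lemma norm_le_one_of_orth {m n : ℕ} (M : Matrix (Fin m) (Fin n) ℝ) (h : Mᵀ * M = 1) :
    ‖M‖ ≤ 1 := by
  have h1 : ‖(1 : Matrix (Fin n) (Fin n) ℝ)‖ ≤ 1 := by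
    refine norm_le_bound _ 1 zero_le_one fun v => ?_
    rw [Matrix.one_mulVec, one_mul]
  have h2 : ‖Mᴴ * M‖ = ‖M‖ * ‖M‖ := M.l2_opNorm_conjTranspose_mul_self
  rw [Matrix.conjTranspose_eq_transpose_of_trivial, h] at h2
  nlinarith [norm_nonneg M, h1]

lemma norm_transpose_le {m n : ℕ} (M : Matrix (Fin m) (Fin n) ℝ) : ‖Mᵀ‖ ≤ ‖M‖ := by
  have := M.l2_opNorm_conjTranspose
  rw [Matrix.conjTranspose_eq_transpose_of_trivial] at this
  exact this.le

lemma norm_diagonal_le {n : ℕ} (f : Fin n → ℝ) (c : ℝ) (hc : 0 ≤ c) (h : ∀ i, |f i| ≤ c) :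
    ‖Matrix.diagonal f‖ ≤ c := by
  refine norm_le_bound _ c hc fun v => ?_
  rw [norm_toE, norm_toE]
  have h1 : ∑ i, (Matrix.diagonal f *ᵥ v) i ^ 2 ≤ c ^ 2 * ∑ i, v i ^ 2 := by
    rw [Finset.mul_sum]
    refine Finset.sum_le_sum fun i _ => ?_
    rw [Matrix.mulVec_diagonal]
    calc (f i * v i) ^ 2 = (f i)^2 * (v i)^2 := by ring
      _ ≤ c^2 * v i ^ 2 := by
          have : f i ^ 2 ≤ c ^ 2 := by
            rw [← sq_abs (f i)]; exact pow_le_pow_left₀ (abs_nonneg _) (h i) 2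
          exact mul_le_mul_of_nonneg_right this (sq_nonneg _)
  calc Real.sqrt (∑ i, (Matrix.diagonal f *ᵥ v) i ^ 2) ≤ Real.sqrt (c^2 * ∑ i, v i ^ 2) :=
        Real.sqrt_le_sqrt h1
    _ = c * Real.sqrt (∑ i, v i ^ 2) := by
        rw [Real.sqrt_mul (sq_nonneg c), Real.sqrt_sq hc]

lemma norm_idem_le_one {n : ℕ} (J : Matrix (Fin n) (Fin n) ℝ) (hs : Jᵀ = J) (hi : J * J = J) :
    ‖J‖ ≤ 1 := by
  have h2 : ‖Jᴴ * J‖ = ‖J‖ * ‖J‖ := J.l2_opNorm_conjTranspose_mul_self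
  rw [Matrix.conjTranspose_eq_transpose_of_trivial, hs, hi] at h2
  nlinarith [norm_nonneg J]


lemma matrix_eq_of_mulVec {m n : ℕ} (A A' : Matrix (Fin m) (Fin n) ℝ)
    (h : ∀ v, A *ᵥ v = A' *ᵥ v) : A = A' := by
  apply Matrix.toLin'.injective
  apply LinearMap.ext
  intro v
  simpa [Matrix.toLin'_apply] using h v

lemma mul_eigen {p d : ℕ} (SigG : Matrix (Fin p) (Fin p) ℝ) (B : Matrix (Fin p) (Fin d) ℝ)
    (lam : Fin d → ℝ) (heig : ∀ j, SigG.mulVec (fun i => B i j) = lam j • fun i => B i j) :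
    SigG * B = B * Matrix.diagonal lam := by
  ext i j
  have := congrFun (heig j) i
  simp only [Matrix.mulVec, dotProduct, Pi.smul_apply, smul_eq_mul] at this
  rw [Matrix.mul_apply, Matrix.mul_diagonal]
  rw [show ∑ k, SigG i k * B k j = lam j * B i j from this]
  ring

lemma sig_eq {p d : ℕ} (SigG : Matrix (Fin p) (Fin p) ℝ)
    (hsymm : SigGᵀ = SigG) (hrank : SigG.rank = d)
    (lam : Fin d → ℝ) (hpos : ∀ j, 0 < lam j)
    (B : Matrix (Fin p) (Fin d) ℝ) (hB : IsTopEigenbasis SigG B lam) :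
    SigG = B * Matrix.diagonal lam * Bᵀ := by
  obtain ⟨horth, heig, _⟩ := hB
  have hSB : SigG * B = B * Matrix.diagonal lam := mul_eigen SigG B lam heig
  -- B = SigG * (B * diagonal lam⁻¹)
  have hBfact : SigG * (B * Matrix.diagonal (fun j => (lam j)⁻¹)) = B := by
    rw [← Matrix.mul_assoc, hSB, Matrix.mul_assoc, Matrix.diagonal_mul_diagonal]
    have : (fun j => lam j * (lam j)⁻¹) = fun _ => (1:ℝ) := by
      funext j; exact mul_inv_cancel₀ (ne_of_gt (hpos j))
    rw [this, Matrix.diagonal_one, Matrix.mul_one]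
  -- range inclusion
  have hle : LinearMap.range B.mulVecLin ≤ LinearMap.range SigG.mulVecLin := by
    rintro x ⟨y, rfl⟩
    refine ⟨(B * Matrix.diagonal (fun j => (lam j)⁻¹)).mulVec y, ?_⟩
    simp only [Matrix.mulVecLin_apply]
    rw [Matrix.mulVec_mulVec, hBfact]
  -- B has rank d
  have hBinj : Function.Injective B.mulVecLin := by
    intro x y hxy
    have h1 : ∀ z, Bᵀ *ᵥ (B *ᵥ z) = z := by
      intro z
      rw [Matrix.mulVec_mulVec, horth, Matrix.one_mulVec]
    have := congrArg (fun w => Bᵀ *ᵥ w) hxy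
    simpa [Matrix.mulVecLin_apply, h1] using this
  have hrankB : Module.finrank ℝ (LinearMap.range B.mulVecLin) = d := by
    have h1 := LinearMap.finrank_range_add_finrank_ker B.mulVecLin
    rw [LinearMap.ker_eq_bot.2 hBinj] at h1
    simpa using h1
  have heq : LinearMap.range B.mulVecLin = LinearMap.range SigG.mulVecLin := by
    apply Submodule.eq_of_le_of_finrank_le hle
    rw [hrankB]
    exact le_of_eq hrank
  -- SigG kills vectors orthogonal to columns of B
  have hkill : ∀ w : Fin p → ℝ, Bᵀ *ᵥ w = 0 → SigG *ᵥ w = 0 := by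
    intro w hw
    have hmem : SigG *ᵥ w ∈ LinearMap.range B.mulVecLin := by
      rw [heq]; exact ⟨w, rfl⟩
    obtain ⟨y, hy⟩ := hmem
    simp only [Matrix.mulVecLin_apply] at hy
    have hBtS : Bᵀ * SigG = Matrix.diagonal lam * Bᵀ := by
      have : (SigG * B)ᵀ = (B * Matrix.diagonal lam)ᵀ := by rw [hSB]
      rw [Matrix.transpose_mul, Matrix.transpose_mul, hsymm, Matrix.diagonal_transpose] at this
      exact this
    have hy0 : y = 0 := by
      have h1 : Bᵀ *ᵥ (SigG *ᵥ w) = 0 := by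
        rw [Matrix.mulVec_mulVec, hBtS, ← Matrix.mulVec_mulVec, hw, Matrix.mulVec_zero]
      rw [← hy, Matrix.mulVec_mulVec, horth, Matrix.one_mulVec] at h1
      exact h1
    rw [← hy, hy0, Matrix.mulVec_zero]
  apply matrix_eq_of_mulVec
  intro v
  have hw : Bᵀ *ᵥ (v - B *ᵥ (Bᵀ *ᵥ v)) = 0 := by
    rw [Matrix.mulVec_sub, Matrix.mulVec_mulVec, horth, Matrix.one_mulVec, sub_self]
  have := hkill _ hw
  rw [Matrix.mulVec_sub, sub_eq_zero] at this
  rw [this, Matrix.mulVec_mulVec, hSB, Matrix.mulVec_mulVec]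


-- columns of a matrix with orthonormal columns form an orthonormal family
lemma orth_cols {p d : ℕ} (B : Matrix (Fin p) (Fin d) ℝ) (h : Bᵀ * B = 1) :
    Orthonormal ℝ (fun j => toE (fun i => B i j)) := by
  rw [orthonormal_iff_ite]
  intro j k
  rw [inner_toE]
  have := congrFun (congrFun h j) k
  rw [Matrix.mul_apply] at this
  rw [Matrix.one_apply] at this
  simpa [dotProduct, Matrix.transpose_apply] using this

lemma mem_orth_span {n : ℕ} (v : Fin n → EuclideanSpace ℝ (Fin n)) : True := trivial

lemma eigen_lower {p d : ℕ} (hd : 0 < d)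
    (SigG A : Matrix (Fin p) (Fin p) ℝ) (hA : Aᵀ = A)
    (lam : Fin d → ℝ) (B : Matrix (Fin p) (Fin d) ℝ)
    (hBo : Bᵀ * B = 1) (hBeig : ∀ j, SigG *ᵥ (fun i => B i j) = lam j • fun i => B i j)
    (lam' : Fin d → ℝ) (B' : Matrix (Fin p) (Fin d) ℝ) (hB' : IsTopEigenbasis A B' lam')
    (lmin : ℝ) (hlmin : ∀ j, lmin ≤ lam j)
    (t : ℝ) (ht : ‖A - SigG‖ ≤ t) :
    ∀ j, lmin - t ≤ lam' j := by
  classical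
  obtain ⟨hB'o, hB'eig, hB'max⟩ := hB'
  set E := EuclideanSpace ℝ (Fin p)
  set u : Fin d → E := fun j => toE (fun i => B' i j) with hu
  set b : Fin d → E := fun j => toE (fun i => B i j) with hb
  have ou : Orthonormal ℝ u := orth_cols B' hB'o
  have ob : Orthonormal ℝ b := orth_cols B hBo
  set T : E →ₗ[ℝ] E := Matrix.toEuclideanLin A with hT
  have hTapp : ∀ x : E, T x = toE (A *ᵥ (WithLp.equiv 2 (Fin p → ℝ) x)) := fun x => rfl
  have hermA : A.IsHermitian := by
    rw [Matrix.IsHermitian, Matrix.conjTranspose_eq_transpose_of_trivial, hA]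
  have hTsym : T.IsSymmetric := Matrix.isHermitian_iff_isSymmetric.1 hermA
  have hTu : ∀ j, T (u j) = lam' j • u j := by
    intro j
    rw [hTapp, hu]
    show toE (A *ᵥ fun i => B' i j) = lam' j • toE (fun i => B' i j)
    rw [hB'eig j]; rfl
  set sp : Submodule ℝ E := Submodule.span ℝ (Set.range u) with hsp
  set W : Submodule ℝ E := spᗮ with hW
  have humem : ∀ j, u j ∈ sp := fun j => Submodule.subset_span ⟨j, rfl⟩
  have hWmem : ∀ x : E, (∀ j, ⟪u j, x⟫ = 0) → x ∈ W := by
    intro x hx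
    rw [hW, Submodule.mem_orthogonal]
    intro y hy
    induction hy using Submodule.span_induction with
    | mem y hy => obtain ⟨j, rfl⟩ := hy; exact hx j
    | zero => exact inner_zero_left x
    | add y z _ _ hy hz => rw [inner_add_left, hy, hz, add_zero]
    | smul c y _ hy => rw [real_inner_smul_left, hy, mul_zero]
  have hWinner : ∀ x : E, x ∈ W → ∀ j, ⟪u j, x⟫ = 0 := by
    intro x hx j
    exact (Submodule.mem_orthogonal sp x).1 hx (u j) (humem j)
  have hinv : ∀ x ∈ W, T x ∈ W := by
    intro x hx
    apply hWmem
    intro j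
    rw [← hTsym (u j) x, hTu j, real_inner_smul_left, hWinner x hx j, mul_zero]
  -- dimensions
  have hEdim : finrank ℝ E = p := by simp [E]
  have hspdim : finrank ℝ sp = d := by
    rw [hsp, finrank_span_eq_card ou.linearIndependent]
    simp
  have hdp : d ≤ p := by
    have h1 := Submodule.finrank_le sp
    rw [hspdim, hEdim] at h1
    exact h1
  have hWdim : finrank ℝ W = p - d := by
    have := Submodule.finrank_add_finrank_orthogonal sp
    rw [hspdim, hEdim, ← hW] at this
    omega
  -- restricted operator and its eigenbasis
  have hsymW : (T.restrict hinv).IsSymmetric := hTsym.restrict_invariant hinv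
  set vb := hsymW.eigenvectorBasis hWdim with hvb
  set ν := hsymW.eigenvalues hWdim with hν
  have hvbeig : ∀ i, T ((vb i : E)) = ν i • (vb i : E) := by
    intro i
    have h1 := hsymW.apply_eigenvectorBasis hWdim i
    have h2 : ((T.restrict hinv) (vb i) : E) = T ((vb i : E)) := LinearMap.restrict_coe_apply _ _ _
    rw [← h2, h1]
    norm_num [hν, hvb]
  -- each eigenvalue ν i is at most every lam' j
  have hν_le : ∀ i j, ν i ≤ lam' j := by
    intro i j
    set wv : Fin p → ℝ := WithLp.equiv 2 (Fin p → ℝ) ((vb i : E)) with hwv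
    have htoE : toE wv = (vb i : E) := rfl
    have hnz : wv ≠ 0 := by
      intro h0
      have : (vb i : E) = 0 := by
        rw [← htoE, h0]; rfl
      have hnorm := vb.orthonormal.1 i
      rw [show ‖vb i‖ = ‖(vb i : E)‖ from rfl, this, norm_zero] at hnorm
      norm_num at hnorm
    have hev : A *ᵥ wv = ν i • wv := by
      have h1 := hvbeig i
      rw [hTapp] at h1
      have := congrArg (WithLp.equiv 2 (Fin p → ℝ)) h1
      exact this
    have horth : ∀ j, wv ⬝ᵥ (fun i' => B' i' j) = 0 := by
      intro j
      have h1 := hWinner (vb i : E) (vb i).2 j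
      rw [hu] at h1
      rw [show (⟪toE fun i' => B' i' j, (vb i : E)⟫) = (fun i' => B' i' j) ⬝ᵥ wv from
        inner_toE _ _] at h1
      rw [dotProduct_comm]
      exact h1
    exact hB'max (ν i) wv hnz hev horth j
  -- minimum of lam'
  obtain ⟨j₀, _, hj₀⟩ := Finset.exists_min_image Finset.univ lam'
    ⟨⟨0, hd⟩, Finset.mem_univ _⟩
  set m := lam' j₀ with hm
  have hmle : ∀ j, m ≤ lam' j := fun j => hj₀ j (Finset.mem_univ j)
  -- Rayleigh bound on W
  have hray : ∀ x : W, ⟪(x : E), T (x : E)⟫ ≤ m * ‖(x : E)‖ ^ 2 := by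
    intro x
    have hTx : T (x : E) = ((T.restrict hinv) x : E) := (LinearMap.restrict_coe_apply _ _ _).symm
    rw [hTx]
    rw [show (⟪(x : E), ((T.restrict hinv) x : E)⟫) = ⟪x, (T.restrict hinv) x⟫ from rfl]
    rw [← vb.repr.inner_map_map x ((T.restrict hinv) x)]
    have hrepr : ∀ i', vb.repr ((T.restrict hinv) x) i' = ν i' * vb.repr x i' := by
      intro i'
      rw [vb.repr_apply_apply, vb.repr_apply_apply]
      have : ⟪vb i', (T.restrict hinv) x⟫ = ⟪(T.restrict hinv) (vb i'), x⟫ := (hsymW _ _).symm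
      rw [this, hsymW.apply_eigenvectorBasis hWdim i']
      rw [real_inner_smul_left]
      norm_num [hν, hvb]
    rw [PiLp.inner_apply]
    have hnx : ‖(x : E)‖ ^ 2 = ∑ i', (vb.repr x i') ^ 2 := by
      have h1 : ‖x‖ = ‖vb.repr x‖ := (vb.repr.norm_map x).symm
      rw [show ‖(x : E)‖ = ‖x‖ from rfl, h1, EuclideanSpace.norm_eq]
      rw [Real.sq_sqrt (Finset.sum_nonneg fun i' _ => sq_nonneg _)]
      exact Finset.sum_congr rfl fun i' _ => by rw [Real.norm_eq_abs, sq_abs]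
    rw [hnx, Finset.mul_sum]
    refine Finset.sum_le_sum fun i' _ => ?_
    rw [hrepr i']
    have h3 : (inner ℝ (vb.repr x i') (ν i' * vb.repr x i') : ℝ) =
        vb.repr x i' * (ν i' * vb.repr x i') := by
      rw [Real.inner_apply]
    rw [h3]
    have h2 : vb.repr x i' * (ν i' * vb.repr x i') = ν i' * (vb.repr x i') ^ 2 := by ring
    rw [h2]
    exact mul_le_mul_of_nonneg_right (hν_le i' j₀) (sq_nonneg _)
  -- subspaces Z and U
  set Z : Submodule ℝ E := W ⊔ (ℝ ∙ u j₀) with hZdef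
  set U : Submodule ℝ E := Submodule.span ℝ (Set.range b) with hUdef
  have hUdim : finrank ℝ U = d := by
    rw [hUdef, finrank_span_eq_card ob.linearIndependent]; simp
  have huu : ⟪u j₀, u j₀⟫ = 1 := by
    have := ou.1 j₀
    rw [real_inner_self_eq_norm_sq, this]; norm_num
  have hujnz : u j₀ ≠ 0 := by
    intro h0
    rw [h0, inner_zero_left] at huu; norm_num at huu
  have hinf : W ⊓ (ℝ ∙ u j₀) = ⊥ := by
    rw [Submodule.eq_bot_iff]
    rintro x ⟨hxW, hxs⟩
    obtain ⟨α, rfl⟩ := Submodule.mem_span_singleton.1 hxs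
    have h1 := hWinner _ hxW j₀
    rw [real_inner_smul_right, huu, mul_one] at h1
    rw [h1, zero_smul]
  have hZdim : finrank ℝ Z = (p - d) + 1 := by
    have h1 := Submodule.finrank_sup_add_finrank_inf_eq W (ℝ ∙ u j₀)
    rw [hinf, finrank_bot, finrank_span_singleton hujnz, hWdim, ← hZdef] at h1
    omega
  have hIdim : 1 ≤ finrank ℝ (U ⊓ Z : Submodule ℝ E) := by
    have h1 := Submodule.finrank_sup_add_finrank_inf_eq U Z
    have h2 : finrank ℝ (U ⊔ Z : Submodule ℝ E) ≤ p := by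
      have h3 := Submodule.finrank_le (U ⊔ Z)
      rw [hEdim] at h3; exact h3
    rw [hUdim, hZdim] at h1
    omega
  have hne : U ⊓ Z ≠ ⊥ := by
    intro h0
    rw [h0, finrank_bot] at hIdim; omega
  obtain ⟨v0, hv0mem, hv0ne⟩ := (Submodule.ne_bot_iff (U ⊓ Z)).1 hne
  have hv0U : v0 ∈ U := hv0mem.1
  have hv0Z : v0 ∈ Z := hv0mem.2
  -- lower bound on the quadratic form of T at v0
  set TG : E →ₗ[ℝ] E := Matrix.toEuclideanLin SigG with hTG
  have hTGb : ∀ j, TG (b j) = lam j • b j := by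
    intro j
    show toE (SigG *ᵥ fun i => B i j) = lam j • toE (fun i => B i j)
    rw [hBeig j]; rfl
  rw [hUdef] at hv0U
  obtain ⟨c, hc⟩ := (Submodule.mem_span_range_iff_exists_fun ℝ).1 hv0U
  have hTGv0 : TG v0 = ∑ j, (lam j * c j) • b j := by
    rw [← hc, map_sum]
    refine Finset.sum_congr rfl fun j _ => ?_
    rw [_root_.map_smul, hTGb j, smul_smul, mul_comm]
  have hquadG : lmin * ‖v0‖ ^ 2 ≤ ⟪v0, TG v0⟫ := by
    have h1 : ⟪v0, TG v0⟫ = ∑ j, c j * (lam j * c j) := by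
      rw [hTGv0]
      conv_lhs => rw [← hc]
      have h4 := ob.inner_sum c (fun j => lam j * c j) Finset.univ
      simpa using h4
    have h2 : ‖v0‖ ^ 2 = ∑ j, c j * c j := by
      rw [← real_inner_self_eq_norm_sq]
      conv_lhs => rw [← hc]
      have h4 := ob.inner_sum c c Finset.univ
      simpa using h4
    rw [h1, h2, Finset.mul_sum]
    refine Finset.sum_le_sum fun j _ => ?_
    have h5 : lmin * (c j * c j) ≤ lam j * (c j * c j) :=
      mul_le_mul_of_nonneg_right (hlmin j) (mul_self_nonneg _)
    nlinarith [h5]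
  have hTdiff : ‖T v0 - TG v0‖ ≤ t * ‖v0‖ := by
    have h1 : T v0 - TG v0 = Matrix.toEuclideanLin (A - SigG) v0 := by
      rw [map_sub]; rfl
    rw [h1]
    have h2 : Matrix.toEuclideanLin (A - SigG) v0 =
        toE ((A - SigG) *ᵥ (WithLp.equiv 2 (Fin p → ℝ) v0)) := rfl
    rw [h2]
    calc ‖toE ((A - SigG) *ᵥ (WithLp.equiv 2 (Fin p → ℝ) v0))‖
        ≤ ‖A - SigG‖ * ‖toE ((WithLp.equiv 2 (Fin p → ℝ)) v0)‖ := mulVec_norm_le _ _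
      _ ≤ t * ‖v0‖ := by
          have h3 : toE ((WithLp.equiv 2 (Fin p → ℝ)) v0) = v0 := rfl
          rw [h3]
          exact mul_le_mul_of_nonneg_right ht (norm_nonneg v0)
  have hlow : (lmin - t) * ‖v0‖ ^ 2 ≤ ⟪v0, T v0⟫ := by
    have h1 : ⟪v0, T v0⟫ = ⟪v0, TG v0⟫ + ⟪v0, T v0 - TG v0⟫ := by
      rw [← inner_add_right]
      congr 1
      abel
    have h2 : |⟪v0, T v0 - TG v0⟫| ≤ t * ‖v0‖ ^ 2 := by
      calc |⟪v0, T v0 - TG v0⟫| ≤ ‖v0‖ * ‖T v0 - TG v0‖ := abs_real_inner_le_norm _ _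
        _ ≤ ‖v0‖ * (t * ‖v0‖) := mul_le_mul_of_nonneg_left hTdiff (norm_nonneg _)
        _ = t * ‖v0‖ ^ 2 := by ring
    have h3 := abs_le.1 h2
    nlinarith [hquadG, h3.1]
  -- upper bound from membership in Z
  obtain ⟨w, hw, z, hz, hwz⟩ := Submodule.mem_sup.1 hv0Z
  obtain ⟨α, rfl⟩ := Submodule.mem_span_singleton.1 hz
  have hwu : ⟪u j₀, w⟫ = 0 := hWinner w hw j₀
  have hTwu : ⟪u j₀, T w⟫ = 0 := hWinner (T w) (hinv w hw) j₀
  have hup : ⟪v0, T v0⟫ ≤ m * ‖v0‖ ^ 2 := by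
    rw [← hwz]
    have hT1 : T (w + α • u j₀) = T w + (α * m) • u j₀ := by
      rw [map_add, _root_.map_smul, hTu j₀, smul_smul, hm]
    rw [hT1]
    have hexp : ⟪w + α • u j₀, T w + (α * m) • u j₀⟫ =
        ⟪w, T w⟫ + α * α * m := by
      rw [inner_add_left, inner_add_right, inner_add_right]
      rw [real_inner_smul_right, real_inner_smul_left, real_inner_smul_left,
        real_inner_smul_right]
      rw [show ⟪w, u j₀⟫ = 0 from by rw [real_inner_comm]; exact hwu]
      rw [show ⟪u j₀, T w⟫ = 0 from hTwu, huu]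
      ring
    rw [hexp]
    have hnorm : ‖w + α • u j₀‖ ^ 2 = ‖w‖ ^ 2 + α * α := by
      rw [norm_add_sq_real]
      rw [real_inner_smul_right, show ⟪w, u j₀⟫ = 0 from by rw [real_inner_comm]; exact hwu]
      rw [norm_smul]
      have h6 : ‖u j₀‖ = 1 := ou.1 j₀
      rw [h6]
      simp [sq_abs]
      try ring_nf
      try rw [sq_abs]
      try ring
    rw [hnorm]
    have hwray : ⟪w, T w⟫ ≤ m * ‖w‖ ^ 2 := hray ⟨w, hw⟩
    nlinarith [hwray]
  have hv0pos : 0 < ‖v0‖ ^ 2 := by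
    have := norm_pos_iff.2 hv0ne
    positivity
  intro j
  have hfin : lmin - t ≤ m := by nlinarith [hlow, hup, hv0pos]
  exact le_trans hfin (hmle j)



lemma inv_sqrt_close (μ ε : ℝ) (hεnn : 0 ≤ ε) (hε : ε ≤ 1/2) (h : |μ - 1| ≤ ε) :
    |1 - (Real.sqrt μ)⁻¹| ≤ ε := by
  have hμ : 1/2 ≤ μ := by have := abs_le.1 h; linarith [this.1]
  set u := Real.sqrt μ with hu
  have hu0 : 0 < u := Real.sqrt_pos.2 (by linarith)
  have hu2 : u ^ 2 = μ := Real.sq_sqrt (by linarith)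
  have ha : |u - 1| * (u + 1) = |μ - 1| := by
    rw [show u + 1 = |u + 1| from (abs_of_pos (by linarith)).symm, ← abs_mul]
    congr 1
    nlinarith [hu2]
  have hub : 1 ≤ u * (u + 1) := by nlinarith [sq_nonneg (u - 7/10), hu2, hu0.le]
  have h2 : |u - 1| ≤ ε * u := by nlinarith [ha, abs_nonneg (u - 1), hu0.le, h]
  have h3 : 1 - u⁻¹ = (u - 1) / u := by field_simp
  rw [h3, abs_div, abs_of_pos hu0, div_le_iff₀ hu0]
  linarith [h2]

lemma key {p d : ℕ} (hd : 0 < d) (SigG : Matrix (Fin p) (Fin p) ℝ)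
    (lam : Fin d → ℝ) (hpos : ∀ j, 0 < lam j) (B : Matrix (Fin p) (Fin d) ℝ)
    (hB : IsTopEigenbasis SigG B lam) (hfact : SigG = B * Matrix.diagonal lam * Bᵀ) :
    ∃ ε₀ C : ℝ, 0 < ε₀ ∧ 0 < C ∧ ∀ (A : Matrix (Fin p) (Fin p) ℝ), Aᵀ = A →
      ∀ (B' : Matrix (Fin p) (Fin d) ℝ) (lam' : Fin d → ℝ), IsTopEigenbasis A B' lam' →
      ‖A - SigG‖ ≤ ε₀ →
      ∃ Q : Matrix (Fin d) (Fin d) ℝ, Qᵀ * Q = 1 ∧ ‖B' - B * Q‖ ≤ C * ‖A - SigG‖ := by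
  classical
  obtain ⟨jm, _, hjm⟩ := Finset.exists_min_image Finset.univ lam ⟨⟨0, hd⟩, Finset.mem_univ _⟩
  set lmin := lam jm with hlmin_def
  have hl0 : 0 < lmin := hpos jm
  have hlmin : ∀ j, lmin ≤ lam j := fun j => hjm j (Finset.mem_univ j)
  set dp : ℝ := (d : ℝ) with hdp
  set pp : ℝ := (p : ℝ) with hpp
  have hdp1 : 1 ≤ dp := by rw [hdp]; exact_mod_cast hd
  have hpp0 : 0 ≤ pp := Nat.cast_nonneg p
  refine ⟨lmin / (4 * (dp ^ 2 + 1)), 2 * (pp * dp + 1) / lmin, ?_, ?_, ?_⟩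
  · positivity
  · positivity
  intro A hA B' lam' hB' ht0
  set t := ‖A - SigG‖ with htdef
  have ht_nn : 0 ≤ t := norm_nonneg _
  have he0 : lmin / (4 * (dp ^ 2 + 1)) ≤ lmin / 2 := by
    apply div_le_div_of_nonneg_left hl0.le (by norm_num) ?_
    nlinarith [sq_nonneg dp]
  have htl2 : t ≤ lmin / 2 := le_trans ht0 he0
  -- eigenvalue lower bound
  have hlam' : ∀ j, lmin / 2 ≤ lam' j := by
    intro j
    have := eigen_lower hd SigG A hA lam B hB.1 hB.2.1 lam' B' hB' lmin hlmin t le_rfl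
    linarith [this j]
  obtain ⟨hB'o, hB'eig, _⟩ := hB'
  obtain ⟨hBo, hBeig, _⟩ := hB
  -- projections
  set P : Matrix (Fin p) (Fin p) ℝ := B * Bᵀ with hPdef
  set J : Matrix (Fin p) (Fin p) ℝ := 1 - P with hJdef
  have hPP : P * P = P := by
    rw [hPdef, Matrix.mul_assoc, ← Matrix.mul_assoc Bᵀ, hBo, Matrix.one_mul]
  have hPT : Pᵀ = P := by rw [hPdef, Matrix.transpose_mul, Matrix.transpose_transpose]
  have hJT : Jᵀ = J := by rw [hJdef, Matrix.transpose_sub, Matrix.transpose_one, hPT]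
  have hJJ : J * J = J := by
    rw [hJdef]
    simp only [Matrix.sub_mul, Matrix.mul_sub, Matrix.one_mul, Matrix.mul_one, hPP]
    abel
  have hJnorm : ‖J‖ ≤ 1 := norm_idem_le_one J hJT hJJ
  have hPS : P * SigG = SigG := by
    rw [hfact, hPdef]
    rw [show B * Bᵀ * (B * Matrix.diagonal lam * Bᵀ)
        = B * (Bᵀ * B) * (Matrix.diagonal lam * Bᵀ) from by simp only [Matrix.mul_assoc]]
    rw [hBo, Matrix.mul_one, Matrix.mul_assoc]
  have hJS : J * SigG = 0 := by
    rw [hJdef, Matrix.sub_mul, Matrix.one_mul, hPS, sub_self]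
  have hJA : J * (A - SigG) = J * A := by
    rw [Matrix.mul_sub, hJS, sub_zero]
  -- column bounds for M = J * B'
  set M : Matrix (Fin p) (Fin d) ℝ := J * B' with hMdef
  set s₀ : ℝ := 2 * t / lmin with hs₀
  have hs₀nn : 0 ≤ s₀ := by positivity
  have hcolM : ∀ j, (fun i => M i j) = J *ᵥ (fun i => B' i j) := by
    intro j; funext i; rw [hMdef, Matrix.mul_apply]; rfl
  have hcolB' : ∀ j, ‖toE (fun i => B' i j)‖ = 1 := by
    intro j
    have h1 := congrFun (congrFun hB'o j) j
    rw [Matrix.mul_apply, Matrix.one_apply_eq] at h1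
    have h2 : ∑ i, B' i j ^ 2 = 1 := by
      rw [← h1]
      exact Finset.sum_congr rfl fun i _ => by rw [Matrix.transpose_apply, sq]
    rw [norm_toE, h2, Real.sqrt_one]
  have hMcol : ∀ j, ‖toE (fun i => M i j)‖ ≤ s₀ := by
    intro j
    have h1 : A *ᵥ (fun i => B' i j) = lam' j • fun i => B' i j := hB'eig j
    have h2 : lam' j • (J *ᵥ fun i => B' i j) = J *ᵥ ((A - SigG) *ᵥ fun i => B' i j) := by
      rw [Matrix.mulVec_mulVec, hJA, ← Matrix.mulVec_mulVec, h1, Matrix.mulVec_smul]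
    have h3 : |lam' j| * ‖toE (J *ᵥ fun i => B' i j)‖ ≤ t := by
      have h4 : ‖toE (lam' j • (J *ᵥ fun i => B' i j))‖ =
          |lam' j| * ‖toE (J *ᵥ fun i => B' i j)‖ := by
        rw [show toE (lam' j • (J *ᵥ fun i => B' i j)) = lam' j • toE (J *ᵥ fun i => B' i j)
          from rfl, norm_smul, Real.norm_eq_abs]
      calc |lam' j| * ‖toE (J *ᵥ fun i => B' i j)‖
          = ‖toE (J *ᵥ ((A - SigG) *ᵥ fun i => B' i j))‖ := by rw [← h4, h2]
        _ ≤ ‖J‖ * ‖toE ((A - SigG) *ᵥ fun i => B' i j)‖ := mulVec_norm_le _ _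
        _ ≤ 1 * (t * 1) := by
            refine mul_le_mul hJnorm ?_ (norm_nonneg _) zero_le_one
            calc ‖toE ((A - SigG) *ᵥ fun i => B' i j)‖
                ≤ ‖A - SigG‖ * ‖toE (fun i => B' i j)‖ := mulVec_norm_le _ _
              _ = t * 1 := by rw [hcolB' j]
        _ = t := by ring
    rw [hcolM j]
    have h5 : 0 < lam' j := lt_of_lt_of_le (by positivity) (hlam' j)
    have h6 : lam' j * ‖toE (J *ᵥ fun i => B' i j)‖ ≤ t := by
      rw [← abs_of_pos h5]; exact h3
    rw [hs₀]
    rw [show 2 * t / lmin = t / (lmin / 2) from by field_simp]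
    rw [le_div_iff₀ (by linarith)]
    calc ‖toE (J *ᵥ fun i => B' i j)‖ * (lmin / 2)
        ≤ ‖toE (J *ᵥ fun i => B' i j)‖ * lam' j :=
          mul_le_mul_of_nonneg_left (hlam' j) (norm_nonneg _)
      _ = lam' j * ‖toE (J *ᵥ fun i => B' i j)‖ := by ring
      _ ≤ t := h6
  have hMnorm : ‖M‖ ≤ pp * dp * s₀ := by
    calc ‖M‖ ≤ ∑ i, ∑ j, |M i j| := norm_matrix_le_sum_abs M
      _ ≤ ∑ _i : Fin p, ∑ _j : Fin d, s₀ := by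
          refine Finset.sum_le_sum fun i _ => Finset.sum_le_sum fun j _ => ?_
          exact le_trans (abs_le_norm (fun i' => M i' j) i) (hMcol j)
      _ = pp * dp * s₀ := by
          simp [Finset.sum_const, hpp, hdp]
          ring
  -- Gram matrix S and its spectral decomposition
  set G : Matrix (Fin d) (Fin d) ℝ := Bᵀ * B' with hGdef
  set S : Matrix (Fin d) (Fin d) ℝ := Gᵀ * G with hSdef
  have hMT : Mᵀ = B'ᵀ * J := by rw [hMdef, Matrix.transpose_mul, hJT]
  have hSM : (1 : Matrix (Fin d) (Fin d) ℝ) - S = Mᵀ * M := by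
    rw [hMT, hMdef]
    rw [show B'ᵀ * J * (J * B') = B'ᵀ * (J * J * B') from by simp only [Matrix.mul_assoc]]
    rw [hJJ]
    rw [hJdef, Matrix.sub_mul, Matrix.one_mul, Matrix.mul_sub, hB'o]
    congr 1
    rw [hSdef, hGdef, Matrix.transpose_mul, Matrix.transpose_transpose, hPdef]
    simp only [Matrix.mul_assoc]
  have hs₀le : s₀ ≤ 1 / (2 * (dp ^ 2 + 1)) := by
    have ht0' : t * (4 * (dp ^ 2 + 1)) ≤ lmin := by
      rw [← le_div_iff₀ (by positivity)]
      exact ht0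
    rw [hs₀, div_le_div_iff₀ hl0 (by positivity)]
    nlinarith [ht0']
  have hεle : ‖(1 : Matrix (Fin d) (Fin d) ℝ) - S‖ ≤ dp * dp * (s₀ * s₀) := by
    rw [hSM]
    calc ‖Mᵀ * M‖ ≤ ∑ j, ∑ k, |(Mᵀ * M) j k| := norm_matrix_le_sum_abs _
      _ ≤ ∑ _j : Fin d, ∑ _k : Fin d, s₀ * s₀ := by
          refine Finset.sum_le_sum fun j _ => Finset.sum_le_sum fun k _ => ?_
          have h1 : (Mᵀ * M) j k = (fun i => M i j) ⬝ᵥ (fun i => M i k) := by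
            simp [Matrix.mul_apply, dotProduct, Matrix.transpose_apply]
          rw [h1]
          calc |(fun i => M i j) ⬝ᵥ (fun i => M i k)|
              ≤ ‖toE fun i => M i j‖ * ‖toE fun i => M i k‖ := dot_le _ _
            _ ≤ s₀ * s₀ := mul_le_mul (hMcol j) (hMcol k) (norm_nonneg _) hs₀nn
      _ = dp * dp * (s₀ * s₀) := by
          simp [Finset.sum_const, hdp]
          ring
  set ε : ℝ := ‖(1 : Matrix (Fin d) (Fin d) ℝ) - S‖ with hεdef
  have hεnn : 0 ≤ ε := norm_nonneg _
  have hK : s₀ * (2 * (dp ^ 2 + 1)) ≤ 1 := by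
    rw [← le_div_iff₀ (by positivity)]
    exact hs₀le
  have hε2 : ε ≤ s₀ / 2 := by
    have h1 : dp * dp * (s₀ * s₀) ≤ s₀ / 2 := by nlinarith [hK, hs₀nn, sq_nonneg dp]
    exact le_trans hεle h1
  have hεhalf : ε ≤ 1 / 2 := by
    have h2 : (0:ℝ) ≤ dp ^ 2 - 1 := by nlinarith [hdp1]
    have h1 : s₀ ≤ 1 / 4 := by nlinarith [hK, hs₀nn, mul_nonneg hs₀nn h2]
    linarith [hε2]
  have hSsymm : S.IsHermitian := by
    rw [Matrix.IsHermitian, Matrix.conjTranspose_eq_transpose_of_trivial, hSdef,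
      Matrix.transpose_mul, Matrix.transpose_transpose]
  set vb := hSsymm.eigenvectorBasis with hvbdef
  set μ := hSsymm.eigenvalues with hμdef
  set colV : Fin d → (Fin d → ℝ) := fun j => WithLp.equiv 2 (Fin d → ℝ) (vb j) with hcolVdef
  have hSv : ∀ j, S *ᵥ colV j = μ j • colV j := fun j => hSsymm.mulVec_eigenvectorBasis j
  set V : Matrix (Fin d) (Fin d) ℝ := Matrix.of (fun i j => colV j i) with hVdef
  have hVo : Vᵀ * V = 1 := by
    ext j k
    have h1 := orthonormal_iff_ite.1 vb.orthonormal j k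
    have h2 : colV j ⬝ᵥ colV k = if j = k then (1:ℝ) else 0 := by
      rw [← inner_toE]
      exact h1
    rw [Matrix.mul_apply, Matrix.one_apply]
    simpa [dotProduct, Matrix.transpose_apply, hVdef] using h2
  have hVVt : V * Vᵀ = 1 := mul_eq_one_comm.1 hVo
  have hSV : S * V = V * Matrix.diagonal μ := by
    ext i j
    have h1 := congrFun (hSv j) i
    simp only [Pi.smul_apply, smul_eq_mul] at h1
    rw [Matrix.mul_apply, Matrix.mul_diagonal]
    rw [show (∑ k, S i k * V k j) = (S *ᵥ colV j) i from rfl, h1]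
    exact mul_comm _ _
  have hSdecomp : S = V * Matrix.diagonal μ * Vᵀ := by
    have h1 : S * V * Vᵀ = S := by rw [Matrix.mul_assoc, hVVt, Matrix.mul_one]
    rw [← h1, hSV]
  have hμclose : ∀ i, |μ i - 1| ≤ ε := by
    intro i
    have h1 : (1 - S) *ᵥ colV i = (1 - μ i) • colV i := by
      rw [Matrix.sub_mulVec, Matrix.one_mulVec, hSv i]
      funext k
      simp [sub_smul]
      try ring
    have h2 : ‖toE ((1 - S) *ᵥ colV i)‖ ≤ ε * ‖toE (colV i)‖ := mulVec_norm_le _ _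
    have hnormcol : ‖toE (colV i)‖ = 1 := by
      show ‖vb i‖ = 1
      exact vb.orthonormal.1 i
    rw [h1, show toE ((1 - μ i) • colV i) = (1 - μ i) • toE (colV i) from rfl,
      norm_smul, Real.norm_eq_abs, hnormcol] at h2
    rw [abs_sub_comm]
    simpa using h2
  have hμpos : ∀ i, 0 < μ i := by
    intro i
    have h1 := abs_le.1 (le_trans (hμclose i) hεhalf)
    linarith [h1.1]
  set g : Fin d → ℝ := fun i => (Real.sqrt (μ i))⁻¹ with hgdef
  have hgbound : ∀ i, |1 - g i| ≤ ε := fun i => inv_sqrt_close (μ i) ε hεnn hεhalf (hμclose i)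
  have hVdV : ∀ f h : Fin d → ℝ, (V * Matrix.diagonal f * Vᵀ) * (V * Matrix.diagonal h * Vᵀ)
      = V * Matrix.diagonal (fun i => f i * h i) * Vᵀ := by
    intro f h
    calc (V * Matrix.diagonal f * Vᵀ) * (V * Matrix.diagonal h * Vᵀ)
        = V * Matrix.diagonal f * (Vᵀ * V) * (Matrix.diagonal h * Vᵀ) := by
          simp only [Matrix.mul_assoc]
      _ = V * (Matrix.diagonal f * Matrix.diagonal h) * Vᵀ := by
          rw [hVo, Matrix.mul_one]
          simp only [Matrix.mul_assoc]
      _ = V * Matrix.diagonal (fun i => f i * h i) * Vᵀ := by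
          rw [Matrix.diagonal_mul_diagonal]
  set R : Matrix (Fin d) (Fin d) ℝ := V * Matrix.diagonal g * Vᵀ with hRdef
  have hRT : Rᵀ = R := by
    rw [hRdef, Matrix.transpose_mul, Matrix.transpose_mul, Matrix.transpose_transpose,
      Matrix.diagonal_transpose]
    simp only [Matrix.mul_assoc]
  set Q : Matrix (Fin d) (Fin d) ℝ := G * R with hQdef
  have hRSR : R * S * R = 1 := by
    rw [hSdecomp, hRdef, hVdV, hVdV]
    have h1 : (fun i => g i * μ i * g i) = fun _ => (1:ℝ) := by
      funext i
      have hs := Real.sqrt_pos.2 (hμpos i)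
      have h2 : Real.sqrt (μ i) * Real.sqrt (μ i) = μ i := Real.mul_self_sqrt (hμpos i).le
      rw [hgdef]
      field_simp
      try nlinarith [h2]
    rw [show (fun i => (fun i' => g i' * μ i') i * g i) = fun i => g i * μ i * g i from rfl, h1]
    rw [Matrix.diagonal_one, Matrix.mul_one, hVVt]
  have hQorth : Qᵀ * Q = 1 := by
    rw [hQdef, Matrix.transpose_mul, hRT]
    rw [show R * Gᵀ * (G * R) = R * (Gᵀ * G) * R from by simp only [Matrix.mul_assoc]]
    rw [← hSdef]
    exact hRSR
  have hGnorm : ‖G‖ ≤ 1 := by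
    rw [hGdef]
    calc ‖Bᵀ * B'‖ ≤ ‖Bᵀ‖ * ‖B'‖ := Matrix.l2_opNorm_mul _ _
      _ ≤ 1 * 1 := mul_le_mul (le_trans (norm_transpose_le B) (norm_le_one_of_orth B hBo))
          (norm_le_one_of_orth B' hB'o) (norm_nonneg _) zero_le_one
      _ = 1 := by ring
  have hGQ : G - Q = G * (V * Matrix.diagonal (fun i => 1 - g i) * Vᵀ) := by
    have h1 : Matrix.diagonal (fun i => 1 - g i) = 1 - Matrix.diagonal g := by
      rw [← Matrix.diagonal_one, ← Matrix.diagonal_sub]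
      try rfl
    rw [h1, Matrix.mul_sub, Matrix.sub_mul, Matrix.mul_one, hVVt, Matrix.mul_sub, ← hRdef,
      hQdef, Matrix.mul_one]
  have hDnorm : ‖Matrix.diagonal (fun i => 1 - g i)‖ ≤ ε := norm_diagonal_le _ ε hεnn hgbound
  have hVnorm : ‖V‖ ≤ 1 := norm_le_one_of_orth V hVo
  have hVtnorm : ‖Vᵀ‖ ≤ 1 := le_trans (norm_transpose_le V) hVnorm
  have hGQnorm : ‖G - Q‖ ≤ ε := by
    rw [hGQ]
    calc ‖G * (V * Matrix.diagonal (fun i => 1 - g i) * Vᵀ)‖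
        ≤ ‖G‖ * ‖V * Matrix.diagonal (fun i => 1 - g i) * Vᵀ‖ := Matrix.l2_opNorm_mul _ _
      _ ≤ 1 * ‖V * Matrix.diagonal (fun i => 1 - g i) * Vᵀ‖ :=
          mul_le_mul_of_nonneg_right hGnorm (norm_nonneg _)
      _ = ‖V * Matrix.diagonal (fun i => 1 - g i) * Vᵀ‖ := one_mul _
      _ ≤ ‖V * Matrix.diagonal (fun i => 1 - g i)‖ * ‖Vᵀ‖ := Matrix.l2_opNorm_mul _ _
      _ ≤ ‖V * Matrix.diagonal (fun i => 1 - g i)‖ * 1 :=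
          mul_le_mul_of_nonneg_left hVtnorm (norm_nonneg _)
      _ = ‖V * Matrix.diagonal (fun i => 1 - g i)‖ := mul_one _
      _ ≤ ‖V‖ * ‖Matrix.diagonal (fun i => 1 - g i)‖ := Matrix.l2_opNorm_mul _ _
      _ ≤ 1 * ε := mul_le_mul hVnorm hDnorm (norm_nonneg _) zero_le_one
      _ = ε := one_mul _
  have hfinal : B' - B * Q = M + B * (G - Q) := by
    rw [hMdef, hJdef, Matrix.sub_mul, Matrix.one_mul, Matrix.mul_sub, hPdef, hGdef,
      Matrix.mul_assoc]
    abel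
  refine ⟨Q, hQorth, ?_⟩
  have hBQnorm : ‖B' - B * Q‖ ≤ pp * dp * s₀ + ε := by
    rw [hfinal]
    calc ‖M + B * (G - Q)‖ ≤ ‖M‖ + ‖B * (G - Q)‖ := norm_add_le _ _
      _ ≤ pp * dp * s₀ + ε := by
          have h1 : ‖B * (G - Q)‖ ≤ 1 * ε := by
            calc ‖B * (G - Q)‖ ≤ ‖B‖ * ‖G - Q‖ := Matrix.l2_opNorm_mul _ _
              _ ≤ 1 * ε := mul_le_mul (norm_le_one_of_orth B hBo) hGQnorm (norm_nonneg _)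
                  zero_le_one
          linarith [hMnorm, h1]
  have hCs : 2 * (pp * dp + 1) / lmin * t = (pp * dp + 1) * s₀ := by
    rw [hs₀]
    field_simp
  rw [hCs]
  have hppdp : 0 ≤ pp * dp := mul_nonneg hpp0 (by linarith)
  nlinarith [hBQnorm, hε2, hs₀nn]



end SDRAux

/-- **Theorem 2 of the paper** (via the Davis–Kahan theorem): if `Σ_G` is symmetric
positive semidefinite of rank `d` with distinct positive nonzero eigenvalues, `B` holds
its top-`d` orthonormal eigenvectors, and `Σ̃ n` are random symmetric matrices with
`‖Σ̃ n − Σ_G‖ = O_P(r n)`, `r n → 0`, then any measurable choice `B̃ n` of top-`d`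
orthonormal eigenvectors of `Σ̃ n` satisfies `‖B̃ n − B Q n‖ = O_P(r n)` for some
(random) `d × d` orthogonal matrices `Q n`. -/
theorem sdr_eigenbasis_rate
    {Ω : ℕ → Type*} [∀ n, MeasurableSpace (Ω n)]
    (μ : ∀ n, MeasureTheory.Measure (Ω n)) [∀ n, IsProbabilityMeasure (μ n)]
    (p d : ℕ)
    (SigG : Matrix (Fin p) (Fin p) ℝ)
    (hsymm : SigG.PosSemidef)
    (hrank : SigG.rank = d)
    (lam : Fin d → ℝ) (hpos : ∀ j, 0 < lam j) (hdist : Function.Injective lam)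
    (B : Matrix (Fin p) (Fin d) ℝ)
    (hB : IsTopEigenbasis SigG B lam)
    (tSig : ∀ n, Ω n → Matrix (Fin p) (Fin p) ℝ)
    (htsymm : ∀ n ω, (tSig n ω)ᵀ = tSig n ω)
    (r : ℕ → ℝ) (hrpos : ∀ n, 0 ≤ r n) (hr : Tendsto r atTop (nhds 0))
    (hOP : IsBigOP μ (fun n ω => specNorm (tSig n ω - SigG)) r)
    (tB : ∀ n, Ω n → Matrix (Fin p) (Fin d) ℝ)
    (htB : ∀ n ω, ∃ lam' : Fin d → ℝ, IsTopEigenbasis (tSig n ω) (tB n ω) lam') :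
    ∃ Q : ∀ n, Ω n → Matrix (Fin d) (Fin d) ℝ,
      (∀ n ω, (Q n ω)ᵀ * Q n ω = 1) ∧
      IsBigOP μ (fun n ω => specNorm (tB n ω - B * Q n ω)) r := by
  classical
  rcases Nat.eq_zero_or_pos d with hd0 | hd
  · subst hd0
    refine ⟨fun n ω => 1, fun n ω => by rw [Matrix.transpose_one, Matrix.one_mul], ?_⟩
    intro δ hδ
    refine ⟨1, 0, fun n _ => ?_⟩
    have hset : {ω | 1 * r n < |specNorm (tB n ω - B * (1 : Matrix (Fin 0) (Fin 0) ℝ))|} = ∅ := by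
      ext ω
      simp only [Set.mem_setOf_eq, Set.mem_empty_iff_false, iff_false, not_lt]
      have hz : (tB n ω - B * (1 : Matrix (Fin 0) (Fin 0) ℝ)) = 0 := by
        ext i j; exact Fin.elim0 j
      rw [hz, SDRAux.specNorm_eq, norm_zero, abs_zero]
      simpa using hrpos n
    rw [hset]
    simp
  · have hsymmG : SigGᵀ = SigG := by
      have h1 : SigGᴴ = SigG := hsymm.1
      rwa [Matrix.conjTranspose_eq_transpose_of_trivial] at h1
    have hfact := SDRAux.sig_eq SigG hsymmG hrank lam hpos B hB
    obtain ⟨ε₀, C, hε₀, hC, hkey⟩ := SDRAux.key hd SigG lam hpos B hB hfact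
    refine ⟨fun n ω =>
      if h : ∃ Q' : Matrix (Fin d) (Fin d) ℝ, Q'ᵀ * Q' = 1 ∧
          specNorm (tB n ω - B * Q') ≤ C * specNorm (tSig n ω - SigG)
      then h.choose else 1, fun n ω => ?_, ?_⟩
    · by_cases h : ∃ Q' : Matrix (Fin d) (Fin d) ℝ, Q'ᵀ * Q' = 1 ∧
          specNorm (tB n ω - B * Q') ≤ C * specNorm (tSig n ω - SigG)
      · simp only [dif_pos h]
        exact h.choose_spec.1
      · simp only [dif_neg h]
        rw [Matrix.transpose_one, Matrix.one_mul]
    · intro δ hδ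
      obtain ⟨M₀, N₀, hM₀⟩ := hOP δ hδ
      have htend : Tendsto (fun n => M₀ * r n) atTop (nhds 0) := by
        simpa using hr.const_mul M₀
      have hev : ∀ᶠ n in atTop, M₀ * r n < ε₀ := htend.eventually_lt_const hε₀
      obtain ⟨N₁, hN₁⟩ := Filter.eventually_atTop.1 hev
      refine ⟨C * M₀, max N₀ N₁, fun n hn => ?_⟩
      have hsub : {ω | C * M₀ * r n <
            |specNorm (tB n ω - B * (if h : ∃ Q' : Matrix (Fin d) (Fin d) ℝ, Q'ᵀ * Q' = 1 ∧
              specNorm (tB n ω - B * Q') ≤ C * specNorm (tSig n ω - SigG)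
              then h.choose else 1))|} ⊆
          {ω | M₀ * r n < |specNorm (tSig n ω - SigG)|} := by
        intro ω hω
        by_contra hcon
        simp only [Set.mem_setOf_eq, not_lt] at hcon
        have hEnn : 0 ≤ specNorm (tSig n ω - SigG) := by
          rw [SDRAux.specNorm_eq]; exact norm_nonneg _
        rw [abs_of_nonneg hEnn] at hcon
        have hEε : specNorm (tSig n ω - SigG) ≤ ε₀ :=
          le_trans hcon (le_of_lt (hN₁ n (le_trans (le_max_right N₀ N₁) hn)))
        obtain ⟨lam', hB'⟩ := htB n ω
        obtain ⟨Q', hQ'o, hQ'b⟩ := hkey (tSig n ω) (htsymm n ω) (tB n ω) lam' hB' hEε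
        have hex : ∃ Q' : Matrix (Fin d) (Fin d) ℝ, Q'ᵀ * Q' = 1 ∧
            specNorm (tB n ω - B * Q') ≤ C * specNorm (tSig n ω - SigG) := ⟨Q', hQ'o, hQ'b⟩
        simp only [Set.mem_setOf_eq, dif_pos hex] at hω
        have hb := hex.choose_spec.2
        have hZnn : 0 ≤ specNorm (tB n ω - B * hex.choose) := by
          rw [SDRAux.specNorm_eq]; exact norm_nonneg _
        rw [abs_of_nonneg hZnn] at hω
        have : specNorm (tB n ω - B * hex.choose) ≤ C * M₀ * r n := by
          calc specNorm (tB n ω - B * hex.choose)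
              ≤ C * specNorm (tSig n ω - SigG) := hb
            _ ≤ C * (M₀ * r n) := mul_le_mul_of_nonneg_left hcon hC.le
            _ = C * M₀ * r n := by ring
        exact absurd hω (not_lt.2 this)
      exact le_trans (measure_mono hsub) (hM₀ n (le_trans (le_max_left N₀ N₁) hn))
end
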